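/- With the spherically symmetric density π₀(z) ∝ ‖z‖₂^{−k} exp(−‖z‖₂²/(2σ²)) (0 ≤ k < d, σ > 0) and the ℓ₂ ball B = {δ : ‖δ‖₂ ≤ r}, the maximum of D(δ) = ∫ (λπ₀(z) − π₀(z−δ))₊ dz over δ ∈ B is attained at δ* = (r, 0, …, 0), for every λ > 0. -/

import Mathlib

open MeasureTheory

private noncomputable def gprof (C k σ : ℝ) : ℝ → ℝ :=
  fun s => C * Real.sqrt s ^ (-k) * Real.exp (-s / (2 * σ ^ 2))

private lemma gprof_nonneg {C k σ : ℝ} (hC : 0 ≤ C) (s : ℝ) : 0 ≤ gprof C k σ s := by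
  unfold gprof
  have h1 : (0:ℝ) ≤ Real.sqrt s ^ (-k) := Real.rpow_nonneg (Real.sqrt_nonneg s) _
  positivity

private lemma gprof_meas {C k σ : ℝ} : Measurable (gprof C k σ) := by
  unfold gprof
  exact (measurable_const.mul (Real.continuous_sqrt.measurable.pow measurable_const)).mul
    (Real.measurable_exp.comp (measurable_id'.neg.div_const _))

private lemma gprof_mono {C k σ : ℝ} (hC : 0 ≤ C) (hk : 0 ≤ k) {s s' : ℝ}
    (hs : 0 < s) (hss : s ≤ s') : gprof C k σ s' ≤ gprof C k σ s := by
  unfold gprof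
  have h1 : Real.sqrt s' ^ (-k) ≤ Real.sqrt s ^ (-k) :=
    Real.rpow_le_rpow_of_nonpos (Real.sqrt_pos.2 hs) (Real.sqrt_le_sqrt hss) (neg_nonpos.2 hk)
  have hσ2 : (0:ℝ) ≤ σ ^ 2 := sq_nonneg σ
  have h2 : Real.exp (-s' / (2 * σ ^ 2)) ≤ Real.exp (-s / (2 * σ ^ 2)) := by
    apply Real.exp_le_exp.2
    rcases eq_or_lt_of_le hσ2 with h | h
    · rw [← h]; norm_num
    · have h2σ : (0:ℝ) < 2 * σ ^ 2 := by linarith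
      exact div_le_div_of_nonneg_right (by linarith) h2σ.le
  refine mul_le_mul (mul_le_mul_of_nonneg_left h1 hC) h2 (Real.exp_pos _).le ?_
  exact mul_nonneg hC (Real.rpow_nonneg (Real.sqrt_nonneg s) _)

private lemma gprof_def (C k σ s : ℝ) :
    gprof C k σ s = C * Real.sqrt s ^ (-k) * Real.exp (-s / (2 * σ ^ 2)) := rfl

private lemma min_arith (L M c c' : ℝ) (h0 : 0 ≤ c) (hcc : c ≤ c') :
    min L (M + c') - max (-L) (-M + c') ≤ min L (M + c) - max (-L) (-M + c) := by
  rcases min_cases L (M + c) with ⟨e1, f1⟩ | ⟨e1, f1⟩ <;>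
  rcases min_cases L (M + c') with ⟨e2, f2⟩ | ⟨e2, f2⟩ <;>
  rcases max_cases (-L) (-M + c) with ⟨e3, f3⟩ | ⟨e3, f3⟩ <;>
  rcases max_cases (-L) (-M + c') with ⟨e4, f4⟩ | ⟨e4, f4⟩ <;>
  rw [e1, e2, e3, e4] <;> linarith

private lemma superlevel_ae (p : ℝ → ℝ) (hpe : ∀ x, p (-x) = p x)
    (hpm : ∀ x y : ℝ, 0 < x → x ≤ y → p y ≤ p x) (t : ℝ) :
    {x | t < p x} =ᵐ[volume] (Set.univ : Set ℝ) ∨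
      ∃ L : ℝ, 0 ≤ L ∧ {x | t < p x} =ᵐ[volume] Set.Ioo (-L) L := by
  set A : Set ℝ := {x | t < p x} with hA
  have hsymm : ∀ x, x ∈ A → -x ∈ A := by
    intro x hx; simpa [hA, hpe x] using hx
  by_cases hub : ∃ y : ℝ, ∀ x ∈ A, 0 < x → x ≤ y
  · right
    by_cases hne : ∃ x, 0 < x ∧ x ∈ A
    · obtain ⟨y₀, hy₀⟩ := hub
      obtain ⟨x₀, hx₀pos, hx₀⟩ := hne
      set Ap : Set ℝ := {x | 0 < x ∧ x ∈ A} with hAp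
      have hApne : Ap.Nonempty := ⟨x₀, hx₀pos, hx₀⟩
      have hbdd : BddAbove Ap := ⟨y₀, fun x hx => hy₀ x hx.2 hx.1⟩
      set L := sSup Ap with hL
      have hLpos : 0 < L := lt_of_lt_of_le hx₀pos (le_csSup hbdd ⟨hx₀pos, hx₀⟩)
      refine ⟨L, hLpos.le, ?_⟩
      have h1 : ∀ x, x ∈ A → x ∈ Set.Icc (-L) L := by
        intro x hx
        rcases lt_trichotomy x 0 with hx0 | rfl | hx0
        · have : -x ∈ Ap := ⟨by linarith, hsymm x hx⟩
          have := le_csSup hbdd this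
          constructor <;> linarith
        · constructor <;> linarith
        · have : x ∈ Ap := ⟨hx0, hx⟩
          have := le_csSup hbdd this
          constructor <;> linarith
      have h2 : ∀ x, x ∈ Set.Ioo (-L) L → x ≠ 0 → x ∈ A := by
        intro x hx hx0
        have hmem : ∀ y : ℝ, 0 < y → y < L → y ∈ A := by
          intro y hy hyL
          obtain ⟨z, hz, hyz⟩ := exists_lt_of_lt_csSup hApne hyL
          exact Set.mem_setOf_eq ▸ lt_of_lt_of_le hz.2 (hpm y z hy hyz.le)
        rcases lt_trichotomy x 0 with hneg | rfl | hpos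
        · have : -x ∈ A := hmem (-x) (by linarith) (by cases hx; linarith)
          simpa using hsymm _ this
        · exact absurd rfl hx0
        · exact hmem x hpos hx.2
      have hsub : {x : ℝ | ¬(x ∈ A ↔ x ∈ Set.Ioo (-L) L)} ⊆ ({-L, 0, L} : Set ℝ) := by
        intro x hx
        simp only [Set.mem_setOf_eq] at hx
        by_contra hxx
        simp only [Set.mem_insert_iff, Set.mem_singleton_iff, not_or] at hxx
        obtain ⟨hx1, hx2, hx3⟩ := hxx
        apply hx
        constructor
        · intro hxA
          have := h1 x hxA
          exact ⟨lt_of_le_of_ne this.1 (Ne.symm hx1), lt_of_le_of_ne this.2 hx3⟩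
        · intro hxI
          exact h2 x hxI hx2
      have hnull : volume {x : ℝ | ¬(x ∈ A ↔ x ∈ Set.Ioo (-L) L)} = 0 :=
        measure_mono_null hsub ((Set.toFinite ({-L, 0, L} : Set ℝ)).measure_zero volume)
      exact Filter.eventuallyEq_set.mpr (ae_iff.mpr hnull)
    · -- A has no positive elements; then A ⊆ {0}
      push_neg at hne
      refine ⟨0, le_refl 0, ?_⟩
      have hsub : {x : ℝ | ¬(x ∈ A ↔ x ∈ Set.Ioo (-(0:ℝ)) 0)} ⊆ ({0} : Set ℝ) := by
        intro x hx
        simp only [Set.mem_setOf_eq, Set.mem_singleton_iff] at hx ⊢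
        by_contra hx0
        apply hx
        simp only [neg_zero, Set.Ioo_self, Set.mem_empty_iff_false, iff_false]
        intro hxA
        rcases lt_or_gt_of_ne hx0 with h | h
        · exact hne (-x) (by linarith) (hsymm x hxA)
        · exact hne x h hxA
      have hnull : volume {x : ℝ | ¬(x ∈ A ↔ x ∈ Set.Ioo (-(0:ℝ)) 0)} = 0 :=
        measure_mono_null hsub (measure_singleton 0)
      exact Filter.eventuallyEq_set.mpr (ae_iff.mpr hnull)
  · left
    push_neg at hub
    have hall : ∀ x : ℝ, x ≠ 0 → x ∈ A := by
      intro x hx0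
      have key : ∀ y : ℝ, 0 < y → y ∈ A := by
        intro y hy
        obtain ⟨z, hzA, hzpos, hyz⟩ := hub y
        exact Set.mem_setOf_eq ▸ lt_of_lt_of_le hzA (hpm y z hy hyz.le)
      rcases lt_or_gt_of_ne hx0 with h | h
      · simpa using hsymm _ (key (-x) (by linarith))
      · exact key x h
    have hsub : {x : ℝ | ¬(x ∈ A ↔ x ∈ (Set.univ : Set ℝ))} ⊆ ({0} : Set ℝ) := by
      intro x hx
      simp only [Set.mem_setOf_eq, Set.mem_univ, iff_true, Set.mem_singleton_iff] at hx ⊢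
      by_contra hx0
      exact hx (hall x hx0)
    exact Filter.eventuallyEq_set.mpr (ae_iff.mpr
      (measure_mono_null hsub (measure_singleton 0)))

private lemma key1D (p q : ℝ → ℝ) (hp : Measurable p) (hq : Measurable q)
    (hp0 : ∀ x, 0 ≤ p x) (hq0 : ∀ x, 0 ≤ q x)
    (hpe : ∀ x, p (-x) = p x) (hqe : ∀ x, q (-x) = q x)
    (hpm : ∀ x y : ℝ, 0 < x → x ≤ y → p y ≤ p x)
    (hqm : ∀ x y : ℝ, 0 < x → x ≤ y → q y ≤ q x)
    {c c' : ℝ} (h0 : 0 ≤ c) (hcc : c ≤ c') :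
    ∫⁻ x : ℝ, ENNReal.ofReal (min (p x) (q (x - c'))) ≤
      ∫⁻ x : ℝ, ENNReal.ofReal (min (p x) (q (x - c))) := by
  have layer : ∀ e : ℝ, ∫⁻ x : ℝ, ENNReal.ofReal (min (p x) (q (x - e)))
      = ∫⁻ t in Set.Ioi (0:ℝ),
          volume ({x | t < p x} ∩ (fun x : ℝ => x - e) ⁻¹' {y | t < q y}) := by
    intro e
    rw [lintegral_eq_lintegral_meas_lt volume
      (Filter.Eventually.of_forall fun x => le_min (hp0 x) (hq0 _))
      ((hp.min (hq.comp (measurable_id'.sub_const e))).aemeasurable)]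
    congr 1
    ext t
    congr 1
    ext x
    simp [lt_min_iff]
  rw [layer c, layer c']
  refine lintegral_mono fun t => ?_
  have hBmeas : MeasurableSet {y | t < q y} := measurableSet_lt measurable_const hq
  rcases superlevel_ae p hpe hpm t with hA | ⟨L, hL0, hA⟩
  · -- p-superlevel is a.e. univ
    have h1 : ∀ e : ℝ, volume ({x | t < p x} ∩ (fun x : ℝ => x - e) ⁻¹' {y | t < q y})
        = volume {y | t < q y} := by
      intro e
      rw [measure_congr (hA.inter (Filter.EventuallyEq.refl (ae volume)
        ((fun x : ℝ => x - e) ⁻¹' {y | t < q y})))]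
      rw [Set.univ_inter]
      exact (measurePreserving_sub_right volume e).measure_preimage
        hBmeas.nullMeasurableSet
    rw [h1 c, h1 c']
  · rcases superlevel_ae q hqe hqm t with hB | ⟨M, hM0, hB⟩
    · -- q-superlevel is a.e. univ
      have h1 : ∀ e : ℝ, volume ({x | t < p x} ∩ (fun x : ℝ => x - e) ⁻¹' {y | t < q y})
          = volume {x | t < p x} := by
        intro e
        have hpre : (fun x : ℝ => x - e) ⁻¹' {y | t < q y} =ᵐ[volume] (Set.univ : Set ℝ) := by
          have := (measurePreserving_sub_right volume e).quasiMeasurePreserving.preimage_ae_eq hB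
          simpa using this
        rw [measure_congr ((Filter.EventuallyEq.refl _ _).inter hpre), Set.inter_univ]
      rw [h1 c, h1 c']
    · -- both are a.e. intervals
      have h1 : ∀ e : ℝ, volume ({x | t < p x} ∩ (fun x : ℝ => x - e) ⁻¹' {y | t < q y})
          = ENNReal.ofReal (min L (M + e) - max (-L) (-M + e)) := by
        intro e
        have hpre : (fun x : ℝ => x - e) ⁻¹' {y | t < q y}
            =ᵐ[volume] Set.Ioo (-M + e) (M + e) := by
          have := (measurePreserving_sub_right volume e).quasiMeasurePreserving.preimage_ae_eq hB
          rwa [Set.preimage_sub_const_Ioo] at this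
        rw [measure_congr (hA.inter hpre), Set.Ioo_inter_Ioo, Real.volume_Ioo]
      rw [h1 c, h1 c']
      exact ENNReal.ofReal_le_ofReal (min_arith L M c c' h0 hcc)

private lemma sum_sq_eq_norm_sq {d : ℕ} (x : EuclideanSpace ℝ (Fin d)) :
    ∑ i, x i ^ 2 = ‖x‖ ^ 2 := by
  rw [EuclideanSpace.norm_eq, Real.sq_sqrt (Finset.sum_nonneg fun i _ => sq_nonneg _)]
  simp [Real.norm_eq_abs, sq_abs]

private lemma rot {d : ℕ} (F : ℝ → ℝ → ENNReal)
    (hF : Measurable fun p : ℝ × ℝ => F p.1 p.2)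
    (δ ε : Fin d → ℝ) (hnorm : ∑ i, δ i ^ 2 = ∑ i, ε i ^ 2) :
    ∫⁻ z : Fin d → ℝ, F (∑ i, z i ^ 2) (∑ i, (z - δ) i ^ 2)
      = ∫⁻ z : Fin d → ℝ, F (∑ i, z i ^ 2) (∑ i, (z - ε) i ^ 2) := by
  classical
  set e := (MeasurableEquiv.toLp 2 (Fin d → ℝ)).symm with he
  have hecoord : ∀ (x : EuclideanSpace ℝ (Fin d)) (i : Fin d), e x i = x i := fun x i => rfl
  set v : EuclideanSpace ℝ (Fin d) := e.symm δ with hv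
  set w : EuclideanSpace ℝ (Fin d) := e.symm ε with hw
  have hvc : ∀ i, v i = δ i := fun i => rfl
  have hwc : ∀ i, w i = ε i := fun i => rfl
  have hnorm' : ‖w‖ = ‖v‖ := by
    have h1 : ‖w‖ ^ 2 = ‖v‖ ^ 2 := by
      rw [← sum_sq_eq_norm_sq, ← sum_sq_eq_norm_sq]
      simp only [hvc, hwc]
      exact hnorm.symm
    nlinarith [norm_nonneg w, norm_nonneg v]
  set Q : EuclideanSpace ℝ (Fin d) ≃ₗᵢ[ℝ] EuclideanSpace ℝ (Fin d) :=
    Submodule.reflection (ℝ ∙ (w - v))ᗮ with hQdef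
  have hQ : Q w = v := Submodule.reflection_sub hnorm'
  have hsum_meas : Measurable fun z : Fin d → ℝ => ∑ i, z i ^ 2 :=
    Finset.univ.measurable_sum fun i _ => (measurable_pi_apply i).pow_const 2
  have hGmeas : ∀ η : Fin d → ℝ,
      Measurable fun z : Fin d → ℝ => F (∑ i, z i ^ 2) (∑ i, (z - η) i ^ 2) := by
    intro η
    exact hF.comp (hsum_meas.prodMk (hsum_meas.comp (measurable_id'.sub measurable_const)))
  have mp := EuclideanSpace.volume_preserving_symm_measurableEquiv_toLp (Fin d)
  have mq := Q.measurePreserving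
  calc ∫⁻ z : Fin d → ℝ, F (∑ i, z i ^ 2) (∑ i, (z - δ) i ^ 2)
      = ∫⁻ y : EuclideanSpace ℝ (Fin d), F (∑ i, (e y) i ^ 2) (∑ i, ((e y) - δ) i ^ 2) :=
        (mp.lintegral_comp (hGmeas δ)).symm
    _ = ∫⁻ y : EuclideanSpace ℝ (Fin d),
          F (∑ i, (e (Q y)) i ^ 2) (∑ i, ((e (Q y)) - δ) i ^ 2) :=
        (mq.lintegral_comp ((hGmeas δ).comp e.measurable)).symm
    _ = ∫⁻ y : EuclideanSpace ℝ (Fin d), F (∑ i, (e y) i ^ 2) (∑ i, ((e y) - ε) i ^ 2) := by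
        refine lintegral_congr fun y => ?_
        have h1 : ∑ i, (e (Q y)) i ^ 2 = ∑ i, (e y) i ^ 2 := by
          simp only [hecoord]
          rw [sum_sq_eq_norm_sq, sum_sq_eq_norm_sq, Q.norm_map]
        have h2 : ∑ i, ((e (Q y)) - δ) i ^ 2 = ∑ i, ((e y) - ε) i ^ 2 := by
          have hl : ∀ i, ((e (Q y)) - δ) i = (Q y - v) i := fun i => rfl
          have hr : ∀ i, ((e y) - ε) i = (y - w) i := fun i => rfl
          simp only [hl, hr]
          have : Q y - v = Q (y - w) := by rw [map_sub, hQ]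
          rw [this]
          have h3 : ∑ i, (Q (y - w)) i ^ 2 = ‖Q (y - w)‖ ^ 2 := sum_sq_eq_norm_sq _
          have h4 : ∑ i, (y - w) i ^ 2 = ‖y - w‖ ^ 2 := sum_sq_eq_norm_sq _
          rw [h3, h4, Q.norm_map]
        rw [h1, h2]
    _ = ∫⁻ z : Fin d → ℝ, F (∑ i, z i ^ 2) (∑ i, (z - ε) i ^ 2) :=
        mp.lintegral_comp (hGmeas ε)

private lemma fubini_step {m : ℕ} (H : ℝ → ℝ → ENNReal)
    (hH : Measurable fun p : ℝ × ℝ => H p.1 p.2) (c : ℝ) :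
    ∫⁻ z : Fin (m + 1) → ℝ,
        H (∑ i, z i ^ 2) (∑ i, (z - fun i : Fin (m+1) => if (i : ℕ) = 0 then c else 0) i ^ 2)
      = ∫⁻ w : Fin m → ℝ, ∫⁻ x : ℝ,
          H (x ^ 2 + ∑ j, w j ^ 2) ((x - c) ^ 2 + ∑ j, w j ^ 2) := by
  classical
  set ec : Fin (m+1) → ℝ := fun i => if (i : ℕ) = 0 then c else 0 with hec
  set e2 := MeasurableEquiv.piFinSuccAbove (fun _ : Fin (m + 1) => ℝ) 0 with he2
  have mp2 := measurePreserving_piFinSuccAbove (fun _ : Fin (m + 1) => (volume : Measure ℝ)) 0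
  set G : (Fin (m+1) → ℝ) → ENNReal := fun z => H (∑ i, z i ^ 2) (∑ i, (z - ec) i ^ 2) with hG
  have hsum_meas : Measurable fun z : Fin (m+1) → ℝ => ∑ i, z i ^ 2 :=
    Finset.univ.measurable_sum fun i _ => (measurable_pi_apply i).pow_const 2
  have hGmeas : Measurable G :=
    hH.comp (hsum_meas.prodMk (hsum_meas.comp (measurable_id'.sub measurable_const)))
  have step1 : ∫⁻ z : Fin (m+1) → ℝ, G z
      = ∫⁻ p : ℝ × (Fin m → ℝ), G (e2.symm p) ∂((volume : Measure ℝ).prod volume) := by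
    rw [volume_pi]
    exact ((mp2.symm _).lintegral_comp hGmeas).symm
  have step2 : ∫⁻ p : ℝ × (Fin m → ℝ), G (e2.symm p) ∂((volume : Measure ℝ).prod volume)
      = ∫⁻ w : Fin m → ℝ, ∫⁻ x : ℝ, G (e2.symm (x, w)) := by
    have : ((volume : Measure ℝ).prod (volume : Measure (Fin m → ℝ)))
        = (volume : Measure (ℝ × (Fin m → ℝ))) := rfl
    rw [this]
    exact lintegral_prod_symm _ (hGmeas.comp e2.symm.measurable).aemeasurable
  rw [step1, step2]
  refine lintegral_congr fun w => lintegral_congr fun x => ?_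
  set z : Fin (m+1) → ℝ := e2.symm (x, w) with hz
  have hz0 : z 0 = x := by simp [hz, he2]
  have hzj : ∀ j : Fin m, z j.succ = w j := by
    intro j; simp [hz, he2]
  have hec0 : ec 0 = c := by simp [hec]
  have hecj : ∀ j : Fin m, ec j.succ = 0 := by
    intro j; simp [hec]
  have h1 : ∑ i, z i ^ 2 = x ^ 2 + ∑ j, w j ^ 2 := by
    rw [Fin.sum_univ_succ]
    simp [hz0, hzj]
  have h2 : ∑ i, (z - ec) i ^ 2 = (x - c) ^ 2 + ∑ j, w j ^ 2 := by
    rw [Fin.sum_univ_succ]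
    simp [Pi.sub_apply, hz0, hzj, hec0, hecj]
  rw [hG]
  simp only [h1, h2]

/-- With the spherically symmetric density `π₀(z) ∝ ‖z‖₂^{-k} exp(-‖z‖₂²/(2σ²))`
and the `ℓ₂` ball of radius `r`, the discrepancy `D(δ) = ∫ (λπ₀(z) - π₀(z-δ))₊ dz`
is maximized over the ball at `δ* = (r, 0, …, 0)`. -/
theorem stmt_16 {d : ℕ} (hd : 0 < d) (k σ r : ℝ) (hk : 0 ≤ k) (hkd : k < d)
    (hσ : 0 < σ) (hr : 0 < r)
    (C : ℝ) (hC : 0 < C)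
    (π₀ : (Fin d → ℝ) → ℝ)
    (hπ₀ : π₀ = fun z =>
      C * Real.sqrt (∑ i, z i ^ 2) ^ (-k) *
        Real.exp (-(∑ i, z i ^ 2) / (2 * σ ^ 2)))
    (hint : Integrable π₀) (hprob : ∫ z, π₀ z = 1)
    (lam : ℝ) (hlam : 0 < lam)
    (D : (Fin d → ℝ) → ℝ)
    (hD : D = fun δ => ∫ z, max (lam * π₀ z - π₀ (z - δ)) 0) :
    IsGreatest (D '' {δ | Real.sqrt (∑ i, δ i ^ 2) ≤ r})
      (D fun i : Fin d => if (i : ℕ) = 0 then r else 0) := by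
  classical
  obtain ⟨m, rfl⟩ : ∃ m, d = m + 1 := ⟨d - 1, (Nat.succ_pred_eq_of_pos hd).symm⟩
  set g : ℝ → ℝ := gprof C k σ with hgdef
  have hπfun : π₀ = fun z : Fin (m+1) → ℝ => g (∑ i, z i ^ 2) := by
    rw [hπ₀]
    funext z
    rw [hgdef, gprof_def]
  have hg0 : ∀ s, 0 ≤ g s := gprof_nonneg hC.le
  have hgm : Measurable g := gprof_meas
  have hgmono : ∀ s s' : ℝ, 0 < s → s ≤ s' → g s' ≤ g s :=
    fun s s' hs hss => gprof_mono hC.le hk hs hss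
  have hsum_meas : Measurable fun z : Fin (m+1) → ℝ => ∑ i, z i ^ 2 :=
    Finset.univ.measurable_sum fun i _ => (measurable_pi_apply i).pow_const 2
  have hπmeas : Measurable π₀ := by rw [hπfun]; exact hgm.comp hsum_meas
  -- the overlap functional
  set K : (Fin (m+1) → ℝ) → ENNReal := fun δ =>
    ∫⁻ z : Fin (m+1) → ℝ,
      ENNReal.ofReal (min (lam * π₀ z) (π₀ (z - δ))) with hK
  have hmin_meas : ∀ δ : Fin (m+1) → ℝ,
      Measurable fun z : Fin (m+1) → ℝ => min (lam * π₀ z) (π₀ (z - δ)) := by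
    intro δ
    exact (measurable_const.mul hπmeas).min (hπmeas.comp (measurable_id'.sub measurable_const))
  have hmin_nonneg : ∀ (δ z : Fin (m+1) → ℝ), 0 ≤ min (lam * π₀ z) (π₀ (z - δ)) := by
    intro δ z
    have : ∀ y, 0 ≤ π₀ y := by
      intro y; rw [hπfun]; exact hg0 _
    exact le_min (mul_nonneg hlam.le (this z)) (this _)
  have hmin_int : ∀ δ : Fin (m+1) → ℝ,
      Integrable fun z : Fin (m+1) → ℝ => min (lam * π₀ z) (π₀ (z - δ)) := by
    intro δ
    refine Integrable.mono' (hint.const_mul lam) (hmin_meas δ).aestronglyMeasurable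
      (Filter.Eventually.of_forall fun z => ?_)
    rw [Real.norm_eq_abs, abs_of_nonneg (hmin_nonneg δ z)]
    exact min_le_left _ _
  have hK_fin : ∀ δ : Fin (m+1) → ℝ, K δ ≠ ⊤ := by
    intro δ
    have hle : K δ ≤ ∫⁻ z, ENNReal.ofReal (lam * π₀ z) :=
      lintegral_mono fun z => ENNReal.ofReal_le_ofReal (min_le_left _ _)
    exact ne_top_of_le_ne_top (hint.const_mul lam).lintegral_lt_top.ne hle
  have hDval : ∀ δ : Fin (m+1) → ℝ, D δ = lam - (K δ).toReal := by
    intro δ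
    have hpt : (fun z : Fin (m+1) → ℝ => max (lam * π₀ z - π₀ (z - δ)) 0)
        = fun z => lam * π₀ z - min (lam * π₀ z) (π₀ (z - δ)) := by
      funext z
      rcases le_total (lam * π₀ z) (π₀ (z - δ)) with h | h
      · rw [min_eq_left h, max_eq_right (sub_nonpos.2 h), sub_self]
      · rw [min_eq_right h, max_eq_left (sub_nonneg.2 h)]
    rw [hD]
    show (∫ z, max (lam * π₀ z - π₀ (z - δ)) 0) = lam - (K δ).toReal
    rw [show (fun z : Fin (m+1) → ℝ => max (lam * π₀ z - π₀ (z - δ)) 0) = _ from hpt]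
    rw [integral_sub (hint.const_mul lam) (hmin_int δ)]
    rw [integral_const_mul, hprob, mul_one]
    congr 1
    rw [integral_eq_lintegral_of_nonneg_ae
      (Filter.Eventually.of_forall fun z => hmin_nonneg δ z)
      (hmin_meas δ).aestronglyMeasurable]
  -- rotation invariance
  have hFmeas : Measurable fun p : ℝ × ℝ => ENNReal.ofReal (min (lam * g p.1) (g p.2)) :=
    ENNReal.measurable_ofReal.comp
      ((measurable_const.mul (hgm.comp measurable_fst)).min (hgm.comp measurable_snd))
  have hKg : ∀ δ : Fin (m+1) → ℝ, K δ = ∫⁻ z : Fin (m+1) → ℝ,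
      ENNReal.ofReal (min (lam * g (∑ i, z i ^ 2)) (g (∑ i, (z - δ) i ^ 2))) := by
    intro δ
    rw [hK]
    refine lintegral_congr fun z => ?_
    rw [hπfun]
  have sum_ec : ∀ c : ℝ,
      ∑ i : Fin (m+1), (if (i : ℕ) = 0 then c else 0) ^ 2 = c ^ 2 := by
    intro c
    rw [Fin.sum_univ_succ]
    simp
  have hrot : ∀ δ : Fin (m+1) → ℝ,
      K δ = K (fun i : Fin (m+1) => if (i : ℕ) = 0 then Real.sqrt (∑ i, δ i ^ 2) else 0) := by
    intro δ
    rw [hKg, hKg]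
    exact rot (fun a b => ENNReal.ofReal (min (lam * g a) (g b))) hFmeas _ _
      (by rw [sum_ec, Real.sq_sqrt (Finset.sum_nonneg fun i _ => sq_nonneg _)])
  -- monotonicity along the first axis
  have hmono : ∀ c : ℝ, 0 ≤ c → c ≤ r →
      K (fun i : Fin (m+1) => if (i : ℕ) = 0 then r else 0)
        ≤ K (fun i : Fin (m+1) => if (i : ℕ) = 0 then c else 0) := by
    intro c hc0 hcr
    rw [hKg, hKg]
    rw [fubini_step (fun a b => ENNReal.ofReal (min (lam * g a) (g b))) hFmeas c]
    rw [fubini_step (fun a b => ENNReal.ofReal (min (lam * g a) (g b))) hFmeas r]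
    refine lintegral_mono fun w => ?_
    have hb0 : (0:ℝ) ≤ ∑ j, w j ^ 2 := Finset.sum_nonneg fun j _ => sq_nonneg _
    exact key1D (fun x => lam * g (x ^ 2 + ∑ j, w j ^ 2)) (fun x => g (x ^ 2 + ∑ j, w j ^ 2))
      (measurable_const.mul (hgm.comp ((measurable_id'.pow_const 2).add_const _)))
      (hgm.comp ((measurable_id'.pow_const 2).add_const _))
      (fun x => mul_nonneg hlam.le (hg0 _)) (fun x => hg0 _)
      (fun x => by simp [neg_sq]) (fun x => by simp [neg_sq])
      (fun x y hx hxy => mul_le_mul_of_nonneg_left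
        (hgmono _ _ (by positivity) (by nlinarith)) hlam.le)
      (fun x y hx hxy => hgmono _ _ (by positivity) (by nlinarith))
      hc0 hcr
  constructor
  · refine ⟨_, ?_, rfl⟩
    show Real.sqrt (∑ i : Fin (m+1), (if (i : ℕ) = 0 then r else 0) ^ 2) ≤ r
    rw [sum_ec, Real.sqrt_sq hr.le]
  · rintro y ⟨δ, hδ, rfl⟩
    have hδ' : Real.sqrt (∑ i, δ i ^ 2) ≤ r := hδ
    have hc0 : 0 ≤ Real.sqrt (∑ i, δ i ^ 2) := Real.sqrt_nonneg _
    have h1 := hrot δ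
    have h2 := hmono _ hc0 hδ'
    have h3 := ENNReal.toReal_mono (hK_fin _) h2
    rw [hDval, hDval, h1]
    linarith
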